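/- Let M ∈ (1/2)ℤ_{>0} and s ∈ (1/2)ℤ, and define Ψ̃^{[M;s]}(τ, z₁, z₂, t) = e^{−2πi M t} (Φ̃^{+[M;s]}(τ, z₁, z₂) − Φ̃^{+[M;s]}(τ, −z₂, −z₁)). Then for every τ with Im τ > 0, every t ∈ ℂ, and all z₁, z₂ ∈ ℂ with z₁ ∉ ℤ + 2ℤτ and z₂ ∉ ℤ + 2ℤτ, one has 2 Ψ̃^{[M;s]}(2τ, z₁, z₂, t) = Ψ̃^{[2M;2s]}(τ, z₁/2, z₂/2, t/2) + e^{−2πi s} Ψ̃^{[2M;2s]}(τ, (z₁+1)/2, (z₂−1)/2, t/2). -/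

import Mathlib

noncomputable section

open Complex

/-- `mexp w = e^{2πi w}`. -/
def mexp (w : ℂ) : ℂ := Complex.exp (2 * (Real.pi : ℂ) * Complex.I * w)

/-- The signed mock theta function `Φ^{sgn[m;s]}(τ,z₁,z₂)`. -/
def PhiS (sgn : ℂ) (m s : ℝ) (τ z₁ z₂ : ℂ) : ℂ :=
  ∑' n : ℤ, sgn ^ n *
    mexp ((m : ℂ) * n * (z₁ + z₂) + (s : ℂ) * z₁ + τ * ((m : ℂ) * n ^ 2 + (s : ℂ) * n)) /
    (1 - mexp (z₁ + n * τ))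

/-- The signed theta function `Θ^{sgn}_{j,m}(τ,z)`. -/
def ThetaS (sgn : ℂ) (j m : ℝ) (τ z : ℂ) : ℂ :=
  ∑' n : ℤ, sgn ^ n *
    mexp ((m : ℂ) * z * ((n : ℂ) + ((j / (2 * m) : ℝ) : ℂ)) +
      τ * (m : ℂ) * ((n : ℂ) + ((j / (2 * m) : ℝ) : ℂ)) ^ 2)

/-- `E(x) = 2∫₀ˣ e^{-πu²} du`. -/
def Efun (x : ℝ) : ℝ := 2 * ∫ u in (0:ℝ)..x, Real.exp (-Real.pi * u ^ 2)

/-- `ψ_{m,n}(τ,z) = (n - 2m Im z / Im τ) √(Im τ / m)`. -/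
def psiMN (m n : ℝ) (τ z : ℂ) : ℝ := (n - 2 * m * z.im / τ.im) * Real.sqrt (τ.im / m)

/-- The real-analytic correction `R^{sgn}_{j,m}(τ,z)`; the summation variable `n ∈ j + 2mℤ`
is written as `n = j + 2mk`, `k ∈ ℤ`, so that `(±1)^{(n-j)/(2m)} = sgn^k`. -/
def RS (sgn : ℂ) (j m : ℝ) (τ z : ℂ) : ℂ :=
  ∑' k : ℤ, sgn ^ k *
    (((Real.sign (j + 2 * m * k - 1 / 2 - j + 2 * m) -
        Efun (psiMN m (j + 2 * m * k) τ z) : ℝ)) : ℂ) *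
    Complex.exp (-(Real.pi : ℂ) * Complex.I * (((j + 2 * m * k : ℝ)) : ℂ) ^ 2 * τ / (2 * (m : ℂ))
      + 2 * (Real.pi : ℂ) * Complex.I * (((j + 2 * m * k : ℝ)) : ℂ) * z)

/-- The modifier `Φ^{sgn[m;s]}_add`; the summation variable `j ∈ s + ℤ`, `s ≤ j < s + 2m`
is written as `j = s + i`, `0 ≤ i < ⌈2m⌉`. -/
def PhiAddS (sgn : ℂ) (m s : ℝ) (τ z₁ z₂ : ℂ) : ℂ :=
  ∑ i ∈ Finset.range ⌈2 * m⌉₊,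
    RS sgn (s + i) m τ ((z₁ - z₂) / 2) * ThetaS sgn (s + i) m τ (z₁ + z₂)

/-- The modified (signed) mock theta function `Φ̃^{sgn[m;s]}`. -/
def PhiTilde (sgn : ℂ) (m s : ℝ) (τ z₁ z₂ : ℂ) : ℂ :=
  PhiS sgn m s τ z₁ z₂ - (1 / 2) * PhiAddS sgn m s τ z₁ z₂

end


open Filter

lemma mexp_add (a b : ℂ) : mexp (a + b) = mexp a * mexp b := by
  rw [mexp, mexp, mexp, ← Complex.exp_add]; ring_nf

lemma norm_mexp (w : ℂ) : ‖mexp w‖ = Real.exp (-(2 * Real.pi * w.im)) := by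
  rw [mexp, Complex.norm_exp]
  congr 1
  simp [Complex.mul_re, Complex.mul_im]
  try ring

lemma mexp_half : mexp (1/2) = -1 := by
  rw [mexp, show 2 * (Real.pi:ℂ) * Complex.I * (1/2) = Real.pi * Complex.I by ring,
    Complex.exp_pi_mul_I]

lemma mexp_zero : mexp 0 = 1 := by simp [mexp]

lemma summable_quad (a b : ℝ) (ha : 0 < a) :
    Summable (fun n : ℕ => Real.exp (-(a * (n:ℝ)^2) + b * n)) := by
  apply Summable.of_norm_bounded_eventually (g := fun n : ℕ => (Real.exp (-1))^n)
  · exact summable_geometric_of_lt_one (Real.exp_nonneg _)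
      (by rw [Real.exp_lt_one_iff]; norm_num)
  · rw [Nat.cofinite_eq_atTop]
    filter_upwards [eventually_ge_atTop (⌈(b+1)/a⌉₊ + 1)] with n hn
    have h1 : (b+1)/a ≤ (n:ℝ) := by
      calc (b+1)/a ≤ (⌈(b+1)/a⌉₊ : ℝ) := Nat.le_ceil _
        _ ≤ (n:ℝ) := by exact_mod_cast Nat.le_of_succ_le hn
    have h2 : b + 1 ≤ a * n := by
      rw [div_le_iff₀ ha] at h1; linarith
    rw [Real.norm_eq_abs, Real.abs_exp, ← Real.exp_nat_mul]
    apply Real.exp_le_exp.2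
    have hn0 : (0:ℝ) ≤ (n:ℝ) := Nat.cast_nonneg n
    nlinarith [mul_nonneg hn0 (sub_nonneg.2 h2)]

lemma summable_expbound {f : ℕ → ℂ} (a b C : ℝ) (ha : 0 < a)
    (h : ∀ᶠ n in atTop, ‖f n‖ ≤ C * Real.exp (-(a * (n:ℝ)^2) + b * n)) : Summable f := by
  apply Summable.of_norm_bounded_eventually (g := fun n : ℕ => C * Real.exp (-(a * (n:ℝ)^2) + b * n))
  · exact (summable_quad a b ha).mul_left C
  · rwa [Nat.cofinite_eq_atTop]

lemma exp_div_helper (x y w : ℝ) (h : x - y = w) :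
    Real.exp x / (Real.exp y / 2) = 2 * Real.exp w := by
  rw [← h, Real.exp_sub]
  field_simp

lemma summable_phiterm (m s : ℝ) (hm : 0 < m) (τ z₁ z₂ : ℂ) (hτ : 0 < τ.im) :
    Summable (fun n : ℤ =>
      mexp ((m : ℂ) * n * (z₁ + z₂) + (s : ℂ) * z₁ + τ * ((m : ℂ) * n ^ 2 + (s : ℂ) * n)) /
        (1 - mexp (z₁ + n * τ))) := by
  set F : ℤ → ℂ := fun n =>
      mexp ((m : ℂ) * n * (z₁ + z₂) + (s : ℂ) * z₁ + τ * ((m : ℂ) * n ^ 2 + (s : ℂ) * n)) /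
        (1 - mexp (z₁ + n * τ)) with hF
  have ha : 0 < 2 * Real.pi * (m * τ.im) := by positivity
  have hnum : ∀ n : ℤ,
      ‖mexp ((m : ℂ) * n * (z₁ + z₂) + (s : ℂ) * z₁ + τ * ((m : ℂ) * n ^ 2 + (s : ℂ) * n))‖
      = Real.exp (-(2*Real.pi*(s*z₁.im))) *
        Real.exp (-((2*Real.pi*(m*τ.im)) * (n:ℝ)^2) + (-(2*Real.pi*(m*(z₁+z₂).im + s*τ.im))) * (n:ℝ)) := by
    intro n
    rw [norm_mexp, ← Real.exp_add]
    congr 1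
    have h2im : (((n:ℂ))^2).im = 0 := by
      rw [show ((n:ℂ))^2 = (((n^2 : ℤ)):ℂ) by push_cast; ring, Complex.intCast_im]
    have h2re : (((n:ℂ))^2).re = ((n:ℝ))^2 := by
      rw [show ((n:ℂ))^2 = (((n^2 : ℤ)):ℂ) by push_cast; ring, Complex.intCast_re]
      push_cast; ring
    simp [Complex.add_im, Complex.mul_im, Complex.mul_re, h2im, h2re]
    ring
  have hden : ∀ n : ℤ, ‖mexp (z₁ + n * τ)‖
      = Real.exp (-(2*Real.pi*z₁.im)) * Real.exp (-(2*Real.pi*τ.im) * (n:ℝ)) := by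
    intro n
    rw [norm_mexp, ← Real.exp_add]
    congr 1
    simp [Complex.add_im, Complex.mul_im]
    ring
  apply Summable.of_nat_of_neg
  · -- positive side
    apply summable_expbound (2*Real.pi*(m*τ.im))
      (-(2*Real.pi*(m*(z₁+z₂).im + s*τ.im))) (2 * Real.exp (-(2*Real.pi*(s*z₁.im)))) ha
    have htend : Tendsto (fun n : ℕ => ‖mexp (z₁ + ((n:ℤ):ℂ) * τ)‖) atTop (nhds 0) := by
      have : (fun n : ℕ => ‖mexp (z₁ + ((n:ℤ):ℂ) * τ)‖)
          = fun n : ℕ => Real.exp (-(2*Real.pi*z₁.im)) * (Real.exp (-(2*Real.pi*τ.im)))^n := by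
        funext n
        rw [hden n, ← Real.exp_nat_mul]
        push_cast
        ring_nf
      rw [this]
      have h0 : Tendsto (fun n : ℕ => (Real.exp (-(2*Real.pi*τ.im)))^n) atTop (nhds 0) :=
        tendsto_pow_atTop_nhds_zero_of_lt_one (Real.exp_nonneg _)
          (by rw [Real.exp_lt_one_iff]; nlinarith [Real.pi_pos])
      simpa using h0.const_mul (Real.exp (-(2*Real.pi*z₁.im)))
    filter_upwards [htend.eventually_lt_const (show (0:ℝ) < 1/2 by norm_num)] with n hn
    have hd : (1:ℝ)/2 ≤ ‖1 - mexp (z₁ + ((n:ℤ):ℂ) * τ)‖ := by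
      have := norm_sub_norm_le (1 : ℂ) (mexp (z₁ + ((n:ℤ):ℂ) * τ))
      rw [norm_one] at this
      linarith
    calc ‖F (n:ℤ)‖ = ‖mexp ((m : ℂ) * (n:ℤ) * (z₁ + z₂) + (s : ℂ) * z₁ +
            τ * ((m : ℂ) * ((n:ℤ):ℂ) ^ 2 + (s : ℂ) * (n:ℤ)))‖ / ‖1 - mexp (z₁ + ((n:ℤ):ℂ) * τ)‖ := by
          simp only [hF]; rw [norm_div]
      _ ≤ ‖mexp ((m : ℂ) * (n:ℤ) * (z₁ + z₂) + (s : ℂ) * z₁ +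
            τ * ((m : ℂ) * ((n:ℤ):ℂ) ^ 2 + (s : ℂ) * (n:ℤ)))‖ / (1/2) := by
          apply div_le_div_of_nonneg_left (norm_nonneg _) (by norm_num) hd
      _ = 2 * Real.exp (-(2*Real.pi*(s*z₁.im))) *
            Real.exp (-((2*Real.pi*(m*τ.im)) * (n:ℝ)^2) + (-(2*Real.pi*(m*(z₁+z₂).im + s*τ.im))) * (n:ℝ)) := by
          rw [hnum (n:ℤ)]
          push_cast
          ring
  · -- negative side
    apply summable_expbound (2*Real.pi*(m*τ.im))
      (2*Real.pi*(m*(z₁+z₂).im + s*τ.im - τ.im)) (2 * Real.exp (-(2*Real.pi*((s-1)*z₁.im)))) ha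
    have htend : Tendsto (fun n : ℕ => ‖mexp (z₁ + ((-n:ℤ):ℂ) * τ)‖) atTop atTop := by
      have heq : (fun n : ℕ => ‖mexp (z₁ + ((-n:ℤ):ℂ) * τ)‖)
          = fun n : ℕ => Real.exp (-(2*Real.pi*z₁.im)) * (Real.exp (2*Real.pi*τ.im))^n := by
        funext n
        rw [hden (-n:ℤ), ← Real.exp_nat_mul]
        push_cast
        ring_nf
      rw [heq]
      apply Tendsto.const_mul_atTop (Real.exp_pos _)
      exact tendsto_pow_atTop_atTop_of_one_lt
        (by rw [Real.one_lt_exp_iff]; positivity)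
    filter_upwards [htend.eventually_ge_atTop 2] with n hn
    set u := mexp (z₁ + ((-n:ℤ):ℂ) * τ) with hu
    have hupos : (0:ℝ) < ‖u‖ := by linarith
    have hd : ‖u‖/2 ≤ ‖1 - u‖ := by
      have := norm_sub_norm_le u (1 : ℂ)
      rw [norm_one, ← norm_sub_rev] at this
      linarith
    have hd2 : (0:ℝ) < ‖u‖/2 := by linarith
    calc ‖F (-n:ℤ)‖ = ‖mexp ((m : ℂ) * (-n:ℤ) * (z₁ + z₂) + (s : ℂ) * z₁ +
            τ * ((m : ℂ) * ((-n:ℤ):ℂ) ^ 2 + (s : ℂ) * (-n:ℤ)))‖ / ‖1 - u‖ := by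
          simp only [hF]; rw [norm_div]
      _ ≤ ‖mexp ((m : ℂ) * (-n:ℤ) * (z₁ + z₂) + (s : ℂ) * z₁ +
            τ * ((m : ℂ) * ((-n:ℤ):ℂ) ^ 2 + (s : ℂ) * (-n:ℤ)))‖ / (‖u‖/2) := by
          apply div_le_div_of_nonneg_left (norm_nonneg _) hd2 hd
      _ = 2 * Real.exp (-(2*Real.pi*((s-1)*z₁.im))) *
            Real.exp (-((2*Real.pi*(m*τ.im)) * (n:ℝ)^2) + (2*Real.pi*(m*(z₁+z₂).im + s*τ.im - τ.im)) * (n:ℝ)) := by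
          rw [hnum (-n:ℤ), hu, hden (-n:ℤ), ← Real.exp_add, ← Real.exp_add,
            exp_div_helper _ _ ((-(2*Real.pi*((s-1)*z₁.im))) +
              (-((2*Real.pi*(m*τ.im)) * (n:ℝ)^2) +
                (2*Real.pi*(m*(z₁+z₂).im + s*τ.im - τ.im)) * (n:ℝ))) (by push_cast; ring),
            Real.exp_add]
          ring

lemma twoPiI_ne : (2 * (Real.pi:ℂ) * Complex.I) ≠ 0 := by
  simp [Complex.I_ne_zero, Real.pi_ne_zero, Complex.ofReal_ne_zero]

lemma mexp_eq_one_iff (w : ℂ) : mexp w = 1 ↔ ∃ k : ℤ, w = k := by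
  rw [mexp, Complex.exp_eq_one_iff]
  constructor
  · rintro ⟨k, hk⟩
    exact ⟨k, mul_left_cancel₀ twoPiI_ne (hk.trans (by ring))⟩
  · rintro ⟨k, hk⟩
    exact ⟨k, by rw [hk]; ring⟩

lemma mexp_eq_neg_one_iff (w : ℂ) : mexp w = -1 ↔ ∃ k : ℤ, w = 1/2 + k := by
  rw [mexp, show (-1 : ℂ) = Complex.exp ((Real.pi:ℂ) * Complex.I) by rw [Complex.exp_pi_mul_I],
    Complex.exp_eq_exp_iff_exists_int]
  constructor
  · rintro ⟨k, hk⟩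
    exact ⟨k, mul_left_cancel₀ twoPiI_ne (hk.trans (by ring))⟩
  · rintro ⟨k, hk⟩
    exact ⟨k, by rw [hk]; ring⟩

lemma mexp_half_ne (τ z : ℂ) (hz : ∀ a b : ℤ, z ≠ (a : ℂ) + 2 * (b : ℂ) * τ) (n : ℤ) :
    mexp (z/2 + n * τ) ≠ 1 ∧ mexp (z/2 + n * τ) ≠ -1 := by
  constructor
  · intro h
    obtain ⟨k, hk⟩ := (mexp_eq_one_iff _).1 h
    exact hz (2*k) (-n) (by push_cast; linear_combination 2*hk)
  · intro h
    obtain ⟨k, hk⟩ := (mexp_eq_neg_one_iff _).1 h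
    exact hz (2*k+1) (-n) (by push_cast; linear_combination 2*hk)

lemma key_phi (M2 : ℤ) (hM2 : 0 < M2) (s2 : ℤ) (τ z₁ z₂ : ℂ) (hτ : 0 < τ.im)
    (hz₁ : ∀ a b : ℤ, z₁ ≠ (a : ℂ) + 2 * (b : ℂ) * τ) :
    2 * PhiS 1 ((M2:ℝ)/2) ((s2:ℝ)/2) (2*τ) z₁ z₂ =
      PhiS 1 (M2:ℝ) (s2:ℝ) τ (z₁/2) (z₂/2) +
      mexp (-((s2:ℂ)/2)) * PhiS 1 (M2:ℝ) (s2:ℝ) τ ((z₁+1)/2) ((z₂-1)/2) := by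
  have hM2R : (0:ℝ) < (M2:ℝ) := by exact_mod_cast hM2
  have hf : Summable (fun n : ℤ =>
      mexp (((M2:ℝ) : ℂ) * n * (z₁/2 + z₂/2) + ((s2:ℝ) : ℂ) * (z₁/2) +
        τ * (((M2:ℝ) : ℂ) * n ^ 2 + ((s2:ℝ) : ℂ) * n)) / (1 - mexp (z₁/2 + n * τ))) :=
    summable_phiterm (M2:ℝ) (s2:ℝ) hM2R τ (z₁/2) (z₂/2) hτ
  have hg : Summable (fun n : ℤ =>
      mexp (((M2:ℝ) : ℂ) * n * ((z₁+1)/2 + (z₂-1)/2) + ((s2:ℝ) : ℂ) * ((z₁+1)/2) +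
        τ * (((M2:ℝ) : ℂ) * n ^ 2 + ((s2:ℝ) : ℂ) * n)) / (1 - mexp ((z₁+1)/2 + n * τ))) :=
    summable_phiterm (M2:ℝ) (s2:ℝ) hM2R τ ((z₁+1)/2) ((z₂-1)/2) hτ
  simp only [PhiS, one_zpow, one_mul]
  rw [← tsum_mul_left (a := mexp (-((s2:ℂ)/2))), ← tsum_mul_left (a := (2:ℂ)),
    ← Summable.tsum_add hf (hg.mul_left (mexp (-((s2:ℂ)/2))))]
  refine tsum_congr fun n => ?_
  obtain ⟨hu1, hu2⟩ := mexp_half_ne τ z₁ hz₁ n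
  have h1 : (1:ℂ) - mexp (z₁/2 + (n:ℂ) * τ) ≠ 0 := sub_ne_zero.mpr (Ne.symm hu1)
  have h2 : (1:ℂ) + mexp (z₁/2 + (n:ℂ) * τ) ≠ 0 := fun h => hu2 (by linear_combination h)
  have h3 : (1:ℂ) - mexp (z₁/2 + (n:ℂ) * τ)^2 ≠ 0 := by
    rw [show (1:ℂ) - mexp (z₁/2 + (n:ℂ)*τ)^2
        = (1 - mexp (z₁/2 + (n:ℂ)*τ))*(1 + mexp (z₁/2 + (n:ℂ)*τ)) by ring]
    exact mul_ne_zero h1 h2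
  have e2 : mexp ((z₁+1)/2 + (n:ℂ) * τ) = - mexp (z₁/2 + (n:ℂ) * τ) := by
    rw [show (z₁+1)/2 + (n:ℂ) * τ = (z₁/2 + (n:ℂ)*τ) + 1/2 by ring, mexp_add, mexp_half]
    ring
  have e3 : mexp (z₁ + (n:ℂ) * (2*τ)) = mexp (z₁/2 + (n:ℂ) * τ) ^ 2 := by
    rw [show z₁ + (n:ℂ)*(2*τ) = (z₁/2 + (n:ℂ)*τ) + (z₁/2 + (n:ℂ)*τ) by ring, mexp_add]
    ring
  have nf : mexp (((M2:ℝ) : ℂ) * n * (z₁/2 + z₂/2) + ((s2:ℝ) : ℂ) * (z₁/2) +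
        τ * (((M2:ℝ) : ℂ) * n ^ 2 + ((s2:ℝ) : ℂ) * n))
      = mexp ((((M2:ℝ)/2 : ℝ) : ℂ) * n * (z₁ + z₂) + (((s2:ℝ)/2 : ℝ) : ℂ) * z₁ +
        (2*τ) * ((((M2:ℝ)/2 : ℝ) : ℂ) * n ^ 2 + (((s2:ℝ)/2 : ℝ) : ℂ) * n)) := by
    apply congrArg
    push_cast
    ring
  have ng : mexp (-((s2:ℂ)/2)) * mexp (((M2:ℝ) : ℂ) * n * ((z₁+1)/2 + (z₂-1)/2) +
        ((s2:ℝ) : ℂ) * ((z₁+1)/2) + τ * (((M2:ℝ) : ℂ) * n ^ 2 + ((s2:ℝ) : ℂ) * n))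
      = mexp ((((M2:ℝ)/2 : ℝ) : ℂ) * n * (z₁ + z₂) + (((s2:ℝ)/2 : ℝ) : ℂ) * z₁ +
        (2*τ) * ((((M2:ℝ)/2 : ℝ) : ℂ) * n ^ 2 + (((s2:ℝ)/2 : ℝ) : ℂ) * n)) := by
    rw [← mexp_add]
    apply congrArg
    push_cast
    ring
  rw [e2, e3, nf, sub_neg_eq_add,
    show mexp (-((s2:ℂ)/2)) * (mexp (((M2:ℝ) : ℂ) * n * ((z₁+1)/2 + (z₂-1)/2) +
        ((s2:ℝ) : ℂ) * ((z₁+1)/2) + τ * (((M2:ℝ) : ℂ) * n ^ 2 + ((s2:ℝ) : ℂ) * n)) /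
        (1 + mexp (z₁/2 + (n:ℂ) * τ)))
      = mexp (-((s2:ℂ)/2)) * mexp (((M2:ℝ) : ℂ) * n * ((z₁+1)/2 + (z₂-1)/2) +
        ((s2:ℝ) : ℂ) * ((z₁+1)/2) + τ * (((M2:ℝ) : ℂ) * n ^ 2 + ((s2:ℝ) : ℂ) * n)) /
        (1 + mexp (z₁/2 + (n:ℂ) * τ)) from (mul_div_assoc _ _ _).symm, ng]
  generalize mexp ((((M2:ℝ)/2 : ℝ) : ℂ) * n * (z₁ + z₂) + (((s2:ℝ)/2 : ℝ) : ℂ) * z₁ +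
      (2*τ) * ((((M2:ℝ)/2 : ℝ) : ℂ) * n ^ 2 + (((s2:ℝ)/2 : ℝ) : ℂ) * n)) = N
  generalize mexp (z₁/2 + (n:ℂ) * τ) = u at h1 h2 h3 ⊢
  field_simp
  ring



lemma sum_range_two_mul {M : Type*} [AddCommMonoid M] (n : ℕ) (f : ℕ → M) :
    ∑ i ∈ Finset.range (2*n), f i = ∑ i ∈ Finset.range n, (f (2*i) + f (2*i+1)) := by
  induction n with
  | zero => simp
  | succ k ih =>
      rw [show 2*(k+1) = (2*k+1)+1 by ring, Finset.sum_range_succ, Finset.sum_range_succ, ih,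
        Finset.sum_range_succ, add_assoc]

lemma theta_double (j m : ℝ) (τ z : ℂ) :
    ThetaS 1 j m τ z = ThetaS 1 (j/2) (m/2) (2*τ) (2*z) := by
  rw [ThetaS, ThetaS]
  refine tsum_congr fun n => ?_
  rw [show ((j/2)/(2*(m/2)) : ℝ) = (j/(2*m) : ℝ) by ring]
  simp only [one_zpow, one_mul]
  exact congrArg mexp (by push_cast; ring)

lemma RS_double (j m : ℝ) (hm : 1 ≤ m) (τ z : ℂ) :
    RS 1 j m τ z = RS 1 (j/2) (m/2) (2*τ) (2*z) := by
  rw [RS, RS]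
  refine tsum_congr fun k => ?_
  have hm0 : (0:ℝ) < m := lt_of_lt_of_le one_pos hm
  have hsign : Real.sign (j/2 + 2 * (m/2) * (k:ℝ) - 1/2 - j/2 + 2*(m/2))
      = Real.sign (j + 2 * m * (k:ℝ) - 1/2 - j + 2*m) := by
    rcases le_or_gt 0 k with hk | hk
    · have hk' : (0:ℝ) ≤ (k:ℝ) := by exact_mod_cast hk
      rw [Real.sign_of_pos (by nlinarith), Real.sign_of_pos (by nlinarith)]
    · have hk' : (k:ℝ) ≤ -1 := by exact_mod_cast (by omega : k ≤ -1)
      have hkk : (0:ℝ) ≤ m * (-((k:ℝ)+1)) := mul_nonneg hm0.le (by linarith)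
      rw [Real.sign_of_neg (by nlinarith), Real.sign_of_neg (by nlinarith)]
  have hpsi : psiMN (m/2) (j/2 + 2 * (m/2) * (k:ℝ)) (2*τ) (2*z)
      = psiMN m (j + 2 * m * (k:ℝ)) τ z := by
    rw [psiMN, psiMN]
    have h2z : ((2:ℂ)*z).im = 2*z.im := by simp
    have h2τ : ((2:ℂ)*τ).im = 2*τ.im := by simp
    rw [h2z, h2τ]
    have hs : Real.sqrt (2*τ.im/(m/2)) = 2 * Real.sqrt (τ.im/m) := by
      rw [show 2*τ.im/(m/2) = 2^2*(τ.im/m) by ring, Real.sqrt_mul (by positivity) _,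
        Real.sqrt_sq (by norm_num)]
    rw [hs]
    ring
  rw [← hsign, ← hpsi]
  simp only [one_zpow, one_mul]
  congr 1
  refine congrArg Complex.exp ?_
  rw [show ((j/2 + 2 * (m/2) * (k:ℝ) : ℝ) : ℂ) = ((j + 2 * m * (k:ℝ) : ℝ) : ℂ)/2 by push_cast; ring]
  have hmC : ((m:ℝ):ℂ) ≠ 0 := by
    simpa using hm0.ne'
  push_cast
  field_simp

lemma RS_shift (j : ℝ) (M : ℤ) (τ z : ℂ) :
    RS 1 j (M:ℝ) τ (z + 1/2)
      = Complex.exp ((Real.pi:ℂ) * Complex.I * ((j:ℝ):ℂ)) * RS 1 j (M:ℝ) τ z := by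
  rw [RS, RS, ← tsum_mul_left]
  refine tsum_congr fun k => ?_
  have hpsi : psiMN (M:ℝ) (j + 2 * (M:ℝ) * (k:ℝ)) τ (z + 1/2)
      = psiMN (M:ℝ) (j + 2 * (M:ℝ) * (k:ℝ)) τ z := by
    rw [psiMN, psiMN]
    have : (z + 1/2 : ℂ).im = z.im := by simp
    rw [this]
  rw [hpsi]
  simp only [one_zpow, one_mul]
  rw [show (-(Real.pi:ℂ) * Complex.I * ((j + 2*(M:ℝ)*(k:ℝ) : ℝ):ℂ)^2 * τ / (2*(((M:ℝ)):ℂ))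
        + 2*(Real.pi:ℂ)*Complex.I*((j + 2*(M:ℝ)*(k:ℝ) : ℝ):ℂ)*(z + 1/2))
      = ((Real.pi:ℂ) * Complex.I * ((j:ℝ):ℂ)) + (((M*k : ℤ)):ℂ) * (2*(Real.pi:ℂ)*Complex.I)
        + (-(Real.pi:ℂ) * Complex.I * ((j + 2*(M:ℝ)*(k:ℝ) : ℝ):ℂ)^2 * τ / (2*(((M:ℝ)):ℂ))
        + 2*(Real.pi:ℂ)*Complex.I*((j + 2*(M:ℝ)*(k:ℝ) : ℝ):ℂ)*z) by push_cast; ring,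
    Complex.exp_add, Complex.exp_add, Complex.exp_int_mul_two_pi_mul_I]
  ring

lemma key_add (M2 : ℤ) (hM2 : 0 < M2) (s2 : ℤ) (τ z₁ z₂ : ℂ) (hτ : 0 < τ.im) :
    2 * PhiAddS 1 ((M2:ℝ)/2) ((s2:ℝ)/2) (2*τ) z₁ z₂ =
      PhiAddS 1 (M2:ℝ) (s2:ℝ) τ (z₁/2) (z₂/2) +
      mexp (-((s2:ℂ)/2)) * PhiAddS 1 (M2:ℝ) (s2:ℝ) τ ((z₁+1)/2) ((z₂-1)/2) := by
  obtain ⟨m2, hm2⟩ : ∃ m2 : ℕ, M2 = (m2:ℤ) := ⟨M2.toNat, (Int.toNat_of_nonneg hM2.le).symm⟩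
  subst hm2
  have hm1 : (1:ℝ) ≤ (((m2:ℕ):ℤ):ℝ) := by exact_mod_cast hM2
  rw [PhiAddS, PhiAddS, PhiAddS]
  rw [show 2*((((m2:ℕ):ℤ):ℝ)/2) = ((m2:ℕ):ℝ) by push_cast; ring, Nat.ceil_natCast,
    show 2*(((m2:ℕ):ℤ):ℝ) = ((2*m2:ℕ):ℝ) by push_cast; ring, Nat.ceil_natCast]
  rw [Finset.mul_sum, Finset.mul_sum, ← Finset.sum_add_distrib, sum_range_two_mul]
  refine Finset.sum_congr rfl fun i _ => ?_
  rw [show ((z₁+1)/2 - (z₂-1)/2)/2 = (z₁/2 - z₂/2)/2 + 1/2 by ring,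
    show (z₁+1)/2 + (z₂-1)/2 = z₁/2 + z₂/2 by ring,
    RS_shift ((s2:ℝ) + ((2*i:ℕ):ℝ)) ((m2:ℕ):ℤ) τ ((z₁/2 - z₂/2)/2),
    RS_shift ((s2:ℝ) + ((2*i+1:ℕ):ℝ)) ((m2:ℕ):ℤ) τ ((z₁/2 - z₂/2)/2),
    RS_double ((s2:ℝ) + ((2*i:ℕ):ℝ)) (((m2:ℕ):ℤ):ℝ) hm1 τ ((z₁/2 - z₂/2)/2),
    theta_double ((s2:ℝ) + ((2*i:ℕ):ℝ)) (((m2:ℕ):ℤ):ℝ) τ (z₁/2 + z₂/2),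
    show (((s2:ℝ) + ((2*i:ℕ):ℝ))/2 : ℝ) = (s2:ℝ)/2 + (i:ℝ) by push_cast; ring,
    show (2*((z₁/2 - z₂/2)/2) : ℂ) = (z₁ - z₂)/2 by ring,
    show (2*(z₁/2 + z₂/2) : ℂ) = z₁ + z₂ by ring]
  have hphase0 : mexp (-((s2:ℂ)/2)) *
      Complex.exp ((Real.pi:ℂ) * Complex.I * ((((s2:ℝ) + ((2*i:ℕ):ℝ)):ℝ):ℂ)) = 1 := by
    rw [mexp, ← Complex.exp_add,
      show 2*(Real.pi:ℂ)*Complex.I*(-((s2:ℂ)/2))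
          + (Real.pi:ℂ)*Complex.I*((((s2:ℝ) + ((2*i:ℕ):ℝ)):ℝ):ℂ)
        = ((((i:ℕ):ℤ)):ℂ) * (2*(Real.pi:ℂ)*Complex.I) by push_cast; ring,
      Complex.exp_int_mul_two_pi_mul_I]
  have hphase1 : mexp (-((s2:ℂ)/2)) *
      Complex.exp ((Real.pi:ℂ) * Complex.I * ((((s2:ℝ) + ((2*i+1:ℕ):ℝ)):ℝ):ℂ)) = -1 := by
    rw [mexp, ← Complex.exp_add,
      show 2*(Real.pi:ℂ)*Complex.I*(-((s2:ℂ)/2))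
          + (Real.pi:ℂ)*Complex.I*((((s2:ℝ) + ((2*i+1:ℕ):ℝ)):ℝ):ℂ)
        = (Real.pi:ℂ)*Complex.I + ((((i:ℕ):ℤ)):ℂ) * (2*(Real.pi:ℂ)*Complex.I) by push_cast; ring,
      Complex.exp_add, Complex.exp_int_mul_two_pi_mul_I, Complex.exp_pi_mul_I]
    ring
  linear_combination
    (-(RS 1 ((s2:ℝ)/2 + (i:ℝ)) ((((m2:ℕ):ℤ):ℝ)/2) (2*τ) ((z₁ - z₂)/2) *
      ThetaS 1 ((s2:ℝ)/2 + (i:ℝ)) ((((m2:ℕ):ℤ):ℝ)/2) (2*τ) (z₁ + z₂))) * hphase0 +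
    (-(RS 1 ((s2:ℝ) + ((2*i+1:ℕ):ℝ)) (((m2:ℕ):ℤ):ℝ) τ ((z₁/2 - z₂/2)/2) *
      ThetaS 1 ((s2:ℝ) + ((2*i+1:ℕ):ℝ)) (((m2:ℕ):ℤ):ℝ) τ (z₁/2 + z₂/2))) * hphase1


/-- `Ψ̃^{[M;s]}(τ,z₁,z₂,t) = e^{-2πiMt} (Φ̃^{+[M;s]}(τ,z₁,z₂) - Φ̃^{+[M;s]}(τ,-z₂,-z₁))`. -/
noncomputable def PsiTilde (M s : ℝ) (τ z₁ z₂ t : ℂ) : ℂ :=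
  mexp (-(M : ℂ) * t) * (PhiTilde 1 M s τ z₁ z₂ - PhiTilde 1 M s τ (-z₂) (-z₁))

/-- the doubling identity
`2 Ψ̃^{[M;s]}(2τ,z₁,z₂,t) = Ψ̃^{[2M;2s]}(τ,z₁/2,z₂/2,t/2)
  + e^{-2πis} Ψ̃^{[2M;2s]}(τ,(z₁+1)/2,(z₂-1)/2,t/2)`,
with `M = M2/2 ∈ (1/2)ℤ_{>0}`, `s = s2/2 ∈ (1/2)ℤ`, for `z₁, z₂ ∉ ℤ + 2ℤτ`. -/
theorem stmt19 (M2 : ℤ) (hM2 : 0 < M2) (s2 : ℤ) (τ z₁ z₂ t : ℂ) (hτ : 0 < τ.im)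
    (hz₁ : ∀ a b : ℤ, z₁ ≠ (a : ℂ) + 2 * (b : ℂ) * τ)
    (hz₂ : ∀ a b : ℤ, z₂ ≠ (a : ℂ) + 2 * (b : ℂ) * τ) :
    2 * PsiTilde ((M2 : ℝ) / 2) ((s2 : ℝ) / 2) (2 * τ) z₁ z₂ t =
      PsiTilde (M2 : ℝ) (s2 : ℝ) τ (z₁ / 2) (z₂ / 2) (t / 2) +
        mexp (-((s2 : ℂ) / 2)) * PsiTilde (M2 : ℝ) (s2 : ℝ) τ ((z₁ + 1) / 2) ((z₂ - 1) / 2) (t / 2) := by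
  have key : ∀ w₁ w₂ : ℂ, (∀ a b : ℤ, w₁ ≠ (a:ℂ) + 2*(b:ℂ)*τ) →
      2 * PhiTilde 1 ((M2:ℝ)/2) ((s2:ℝ)/2) (2*τ) w₁ w₂ =
        PhiTilde 1 (M2:ℝ) (s2:ℝ) τ (w₁/2) (w₂/2) +
        mexp (-((s2:ℂ)/2)) * PhiTilde 1 (M2:ℝ) (s2:ℝ) τ ((w₁+1)/2) ((w₂-1)/2) := by
    intro w₁ w₂ hw
    simp only [PhiTilde]
    linear_combination key_phi M2 hM2 s2 τ w₁ w₂ hτ hw - (1/2) * key_add M2 hM2 s2 τ w₁ w₂ hτ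
  have hz₂' : ∀ a b : ℤ, -z₂ ≠ (a:ℂ) + 2*(b:ℂ)*τ := by
    intro a b h
    apply hz₂ (-a) (-b)
    push_cast
    linear_combination -h
  have h1 := key z₁ z₂ hz₁
  have h2 := key (-z₂) (-z₁) hz₂'
  rw [show (-z₂)/2 = -(z₂/2) by ring, show (-z₁)/2 = -(z₁/2) by ring,
    show ((-z₂)+1)/2 = -((z₂-1)/2) by ring, show ((-z₁)-1)/2 = -((z₁+1)/2) by ring] at h2
  simp only [PsiTilde]
  rw [show mexp (-((((M2:ℝ)/2 : ℝ)):ℂ) * t) = mexp (-(((M2:ℝ)):ℂ) * (t/2)) from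
    congrArg mexp (by push_cast; ring)]
  linear_combination mexp (-(((M2:ℝ)):ℂ) * (t/2)) * h1 - mexp (-(((M2:ℝ)):ℂ) * (t/2)) * h2
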